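/- For every real t > 0, the trigamma function satisfies (t + 1/2)/t² < ψ'(t) < (t + 1)/t², and the tetragamma function satisfies −1/t² − 2/t³ < ψ''(t) < −1/t² − 1/t³. -/

import Mathlib

open Filter Topology

/-- Telescoping sum: if `F` is stepwise antitone and tends to `0`, then
`∑ (F n - F (n+1)) = F 0`. -/
lemma hasSum_telescope_of_nonneg (F : ℕ → ℝ) (hmono : ∀ n, F (n + 1) ≤ F n)
    (hF : Tendsto F atTop (𝓝 0)) : HasSum (fun n => F n - F (n + 1)) (F 0) := by
  rw [hasSum_iff_tendsto_nat_of_nonneg (fun n => sub_nonneg.2 (hmono n))]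
  have : Tendsto (fun n : ℕ => F 0 - F n) atTop (𝓝 (F 0 - 0)) :=
    tendsto_const_nhds.sub hF
  simpa [Finset.sum_range_sub' F] using this

/-- The trigamma function `ψ'(t) = ∑_{n ≥ 0} 1/(t+n)²`. -/
noncomputable def trigamma (t : ℝ) : ℝ := ∑' n : ℕ, 1 / (t + n) ^ 2

/-- The tetragamma function `ψ''(t) = −2 ∑_{n ≥ 0} 1/(t+n)³`. -/
noncomputable def tetragamma (t : ℝ) : ℝ := -2 * ∑' n : ℕ, 1 / (t + n) ^ 3

/-- For every `t > 0`, `(t + 1/2)/t² < ψ'(t) < (t + 1)/t²` and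
`−1/t² − 2/t³ < ψ''(t) < −1/t² − 1/t³`. -/
theorem stmt15 (t : ℝ) (ht : 0 < t) :
    ((t + 1 / 2) / t ^ 2 < trigamma t ∧ trigamma t < (t + 1) / t ^ 2) ∧
    (-1 / t ^ 2 - 2 / t ^ 3 < tetragamma t ∧ tetragamma t < -1 / t ^ 2 - 1 / t ^ 3) := by
  have hupos : ∀ n : ℕ, (0 : ℝ) < t + n := fun n => by positivity
  have hstep : ∀ (x c : ℝ) (k : ℕ), 0 < x → 0 < c →
      1 / (c * (x + 1) ^ k) ≤ 1 / (c * x ^ k) := by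
    intro x c k hx hc
    apply one_div_le_one_div_of_le (by positivity)
    exact mul_le_mul_of_nonneg_left (pow_le_pow_left₀ hx.le (by linarith) k) hc.le
  have hstep1 : ∀ x : ℝ, 0 < x → 1 / (x + 1) ≤ 1 / x := fun x hx =>
    one_div_le_one_div_of_le hx (by linarith)
  have hcast : ∀ n : ℕ, t + ((n : ℕ) + 1 : ℕ) = (t + n) + 1 := fun n => by push_cast; ring
  -- limits
  have htend : Tendsto (fun n : ℕ => t + n) atTop atTop :=
    tendsto_atTop_add_const_left _ t tendsto_natCast_atTop_atTop
  have hinv : Tendsto (fun n : ℕ => 1 / (t + n)) atTop (𝓝 0) := by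
    simpa [one_div, Function.comp_def] using tendsto_inv_atTop_zero.comp htend
  have hinvk : ∀ k : ℕ, Tendsto (fun n : ℕ => 1 / (t + n) ^ k) atTop (𝓝 (0 ^ k)) := by
    intro k
    simpa [one_div, ← inv_pow] using hinv.pow k
  have hinv2 : Tendsto (fun n : ℕ => 1 / (t + n) ^ 2) atTop (𝓝 0) := by
    simpa using hinvk 2
  have hinv3 : Tendsto (fun n : ℕ => 1 / (t + n) ^ 3) atTop (𝓝 0) := by
    simpa using hinvk 3
  have hinv2' : Tendsto (fun n : ℕ => 1 / (2 * (t + n) ^ 2)) atTop (𝓝 0) := by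
    have := hinv2.const_mul (1 / 2)
    simpa [one_div, mul_inv, mul_comm] using this
  have hinv3' : Tendsto (fun n : ℕ => 1 / (2 * (t + n) ^ 3)) atTop (𝓝 0) := by
    have := hinv3.const_mul (1 / 2)
    simpa [one_div, mul_inv, mul_comm] using this
  -- pointwise inequalities
  have hB : ∀ x : ℝ, 0 < x → 1 / (x + 1) ^ 2 < 1 / x - 1 / (x + 1) := by
    intro x hx
    have h1 : (0 : ℝ) < x + 1 := by linarith
    rw [div_sub_div _ _ (ne_of_gt hx) (ne_of_gt h1),
      div_lt_div_iff₀ (by positivity) (by positivity)]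
    nlinarith [pow_pos h1 2]
  have hA : ∀ x : ℝ, 0 < x →
      (1 / x + 1 / (2 * x ^ 2)) - (1 / (x + 1) + 1 / (2 * (x + 1) ^ 2)) < 1 / x ^ 2 := by
    intro x hx
    have h1 : (0 : ℝ) < x + 1 := by linarith
    rw [sub_lt_iff_lt_add, div_add_div _ _ (by positivity) (by positivity),
      div_add_div _ _ (by positivity) (by positivity),
      div_add_div _ _ (by positivity) (by positivity),
      div_lt_div_iff₀ (by positivity) (by positivity)]
    nlinarith [pow_pos hx 2, pow_pos h1 2, pow_pos hx 3,
      mul_pos (pow_pos hx 2) (pow_pos h1 2)]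
  have hC : ∀ x : ℝ, 0 < x → 1 / (x + 1) ^ 3 < 1 / (2 * x ^ 2) - 1 / (2 * (x + 1) ^ 2) := by
    intro x hx
    have h1 : (0 : ℝ) < x + 1 := by linarith
    rw [div_sub_div _ _ (by positivity) (by positivity),
      div_lt_div_iff₀ (by positivity) (by positivity)]
    nlinarith [pow_pos hx 2, pow_pos h1 2, pow_pos hx 3, pow_pos h1 3]
  have hD : ∀ x : ℝ, 0 < x →
      (1 / (2 * x ^ 2) + 1 / (2 * x ^ 3)) - (1 / (2 * (x + 1) ^ 2) + 1 / (2 * (x + 1) ^ 3))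
        < 1 / x ^ 3 := by
    intro x hx
    have h1 : (0 : ℝ) < x + 1 := by linarith
    rw [sub_lt_iff_lt_add, div_add_div _ _ (by positivity) (by positivity),
      div_add_div _ _ (by positivity) (by positivity),
      div_add_div _ _ (by positivity) (by positivity),
      div_lt_div_iff₀ (by positivity) (by positivity)]
    nlinarith [pow_pos hx 2, pow_pos h1 2, pow_pos hx 3, pow_pos h1 3,
      mul_pos (pow_pos hx 3) (pow_pos h1 3)]
  -- telescoping sum for 1/(t+n)
  have hT2 : HasSum (fun n : ℕ => 1 / (t + n) - 1 / (t + (n + 1 : ℕ))) (1 / t) := by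
    have := hasSum_telescope_of_nonneg (fun n : ℕ => 1 / (t + n))
      (fun n => by
        show (1 : ℝ) / (t + (n + 1 : ℕ)) ≤ 1 / (t + n)
        rw [hcast n]; exact hstep1 _ (hupos n))
      hinv
    simpa using this
  -- summability of 1/(t+n)^2
  have hsq_shift : Summable (fun n : ℕ => 1 / (t + ((n + 1 : ℕ) : ℝ)) ^ 2) := by
    apply Summable.of_nonneg_of_le (fun n => by positivity) ?_ hT2.summable
    intro n
    show (1 : ℝ) / (t + ((n + 1 : ℕ) : ℝ)) ^ 2 ≤ 1 / (t + n) - 1 / (t + (n + 1 : ℕ))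
    rw [hcast n]
    exact (hB (t + n) (hupos n)).le
  have hsq : Summable (fun n : ℕ => 1 / (t + n) ^ 2) := by
    have := (summable_nat_add_iff (f := fun n : ℕ => 1 / (t + n) ^ 2) 1).mp ?_
    · exact this
    · exact hsq_shift
  -- summability of 1/(t+n)^3
  have hcube : Summable (fun n : ℕ => 1 / (t + n) ^ 3) := by
    apply Summable.of_nonneg_of_le (fun n => by positivity) ?_ (hsq.mul_left (1 / t))
    intro n
    have hn := hupos n
    rw [div_le_iff₀ (by positivity), div_mul_div_comm, one_mul, div_mul_eq_mul_div,
      le_div_iff₀ (by positivity)]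
    nlinarith [pow_pos hn 2]
  -- ============ trigamma lower bound ============
  have hlow2 : (t + 1 / 2) / t ^ 2 < trigamma t := by
    set F : ℕ → ℝ := fun n => 1 / (t + n) + 1 / (2 * (t + n) ^ 2) with hFdef
    have hFmono : ∀ n, F (n + 1) ≤ F n := by
      intro n
      have hn := hupos n
      show 1 / (t + ((n+1:ℕ):ℝ)) + 1 / (2 * (t + ((n+1:ℕ):ℝ)) ^ 2)
          ≤ 1 / (t + n) + 1 / (2 * (t + n) ^ 2)
      rw [hcast n]
      exact add_le_add (hstep1 _ hn) (hstep _ 2 2 hn (by norm_num))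
    have hFtend : Tendsto F atTop (𝓝 0) := by
      have h := hinv.add hinv2'
      rw [add_zero] at h
      exact h
    have hHS := hasSum_telescope_of_nonneg F hFmono hFtend
    have hle : ∀ n : ℕ, F n - F (n + 1) ≤ 1 / (t + n) ^ 2 := by
      intro n
      have h := (hA (t + n) (hupos n)).le
      show (1 / (t + n) + 1 / (2 * (t + n) ^ 2))
          - (1 / (t + ((n+1:ℕ):ℝ)) + 1 / (2 * (t + ((n+1:ℕ):ℝ)) ^ 2)) ≤ 1 / (t + n) ^ 2
      rw [hcast n]
      exact h
    have h0' : F 0 - F (0 + 1) < 1 / (t + (0:ℕ)) ^ 2 := by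
      have h := hA (t + (0:ℕ)) (hupos 0)
      show (1 / (t + ((0:ℕ):ℝ)) + 1 / (2 * (t + ((0:ℕ):ℝ)) ^ 2))
          - (1 / (t + ((0+1:ℕ):ℝ)) + 1 / (2 * (t + ((0+1:ℕ):ℝ)) ^ 2)) < 1 / (t + (0:ℕ)) ^ 2
      rw [hcast 0]
      exact h
    have hlt : ∑' n : ℕ, (F n - F (n + 1)) < trigamma t :=
      Summable.tsum_lt_tsum_of_nonneg (fun n => sub_nonneg.2 (hFmono n)) hle h0' hsq
    have hF0 : F 0 = (t + 1 / 2) / t ^ 2 := by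
      show 1 / (t + ((0:ℕ):ℝ)) + 1 / (2 * (t + ((0:ℕ):ℝ)) ^ 2) = (t + 1 / 2) / t ^ 2
      push_cast
      rw [add_zero]
      field_simp
    calc (t + 1 / 2) / t ^ 2 = ∑' n : ℕ, (F n - F (n + 1)) := by rw [hHS.tsum_eq, hF0]
    _ < trigamma t := hlt
  -- ============ trigamma upper bound ============
  have hup2 : trigamma t < (t + 1) / t ^ 2 := by
    have hsplit : trigamma t
        = 1 / (t + ((0:ℕ):ℝ)) ^ 2 + ∑' n : ℕ, 1 / (t + ((n + 1 : ℕ) : ℝ)) ^ 2 :=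
      Summable.tsum_eq_zero_add hsq
    have hle : ∀ n : ℕ, 1 / (t + ((n + 1 : ℕ) : ℝ)) ^ 2
        ≤ 1 / (t + n) - 1 / (t + (n + 1 : ℕ)) := by
      intro n
      rw [hcast n]
      exact (hB (t + n) (hupos n)).le
    have h0' : 1 / (t + ((0 + 1 : ℕ) : ℝ)) ^ 2
        < 1 / (t + (0:ℕ)) - 1 / (t + (0 + 1 : ℕ)) := by
      rw [hcast 0]
      exact hB (t + (0:ℕ)) (hupos 0)
    have htail : ∑' n : ℕ, 1 / (t + ((n + 1 : ℕ) : ℝ)) ^ 2 < 1 / t := by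
      rw [← hT2.tsum_eq]
      exact Summable.tsum_lt_tsum_of_nonneg (fun n => by positivity) hle h0' hT2.summable
    have ht0 : (1:ℝ) / (t + ((0:ℕ):ℝ)) ^ 2 = 1 / t ^ 2 := by norm_num
    rw [hsplit, ht0]
    have : (t + 1) / t ^ 2 = 1 / t ^ 2 + 1 / t := by field_simp; ring
    rw [this]
    linarith
  -- ============ cube sum bounds ============
  set S : ℝ := ∑' n : ℕ, 1 / (t + n) ^ 3 with hSdef
  have hlowS : 1 / (2 * t ^ 2) + 1 / (2 * t ^ 3) < S := by
    set F : ℕ → ℝ := fun n => 1 / (2 * (t + n) ^ 2) + 1 / (2 * (t + n) ^ 3) with hFdef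
    have hFmono : ∀ n, F (n + 1) ≤ F n := by
      intro n
      have hn := hupos n
      show 1 / (2 * (t + ((n+1:ℕ):ℝ)) ^ 2) + 1 / (2 * (t + ((n+1:ℕ):ℝ)) ^ 3)
          ≤ 1 / (2 * (t + n) ^ 2) + 1 / (2 * (t + n) ^ 3)
      rw [hcast n]
      exact add_le_add (hstep _ 2 2 hn (by norm_num)) (hstep _ 2 3 hn (by norm_num))
    have hFtend : Tendsto F atTop (𝓝 0) := by
      have h := hinv2'.add hinv3'
      rw [add_zero] at h
      exact h
    have hHS := hasSum_telescope_of_nonneg F hFmono hFtend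
    have hle : ∀ n : ℕ, F n - F (n + 1) ≤ 1 / (t + n) ^ 3 := by
      intro n
      have h := (hD (t + n) (hupos n)).le
      show (1 / (2 * (t + n) ^ 2) + 1 / (2 * (t + n) ^ 3))
          - (1 / (2 * (t + ((n+1:ℕ):ℝ)) ^ 2) + 1 / (2 * (t + ((n+1:ℕ):ℝ)) ^ 3))
          ≤ 1 / (t + n) ^ 3
      rw [hcast n]
      exact h
    have h0' : F 0 - F (0 + 1) < 1 / (t + (0:ℕ)) ^ 3 := by
      have h := hD (t + (0:ℕ)) (hupos 0)
      show (1 / (2 * (t + ((0:ℕ):ℝ)) ^ 2) + 1 / (2 * (t + ((0:ℕ):ℝ)) ^ 3))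
          - (1 / (2 * (t + ((0+1:ℕ):ℝ)) ^ 2) + 1 / (2 * (t + ((0+1:ℕ):ℝ)) ^ 3))
          < 1 / (t + (0:ℕ)) ^ 3
      rw [hcast 0]
      exact h
    have hlt : ∑' n : ℕ, (F n - F (n + 1)) < S :=
      Summable.tsum_lt_tsum_of_nonneg (fun n => sub_nonneg.2 (hFmono n)) hle h0' hcube
    have hF0 : F 0 = 1 / (2 * t ^ 2) + 1 / (2 * t ^ 3) := by
      show 1 / (2 * (t + ((0:ℕ):ℝ)) ^ 2) + 1 / (2 * (t + ((0:ℕ):ℝ)) ^ 3)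
          = 1 / (2 * t ^ 2) + 1 / (2 * t ^ 3)
      norm_num
    calc 1 / (2 * t ^ 2) + 1 / (2 * t ^ 3) = ∑' n : ℕ, (F n - F (n + 1)) := by
          rw [hHS.tsum_eq, hF0]
    _ < S := hlt
  have hupS : S < 1 / t ^ 3 + 1 / (2 * t ^ 2) := by
    set F : ℕ → ℝ := fun n => 1 / (2 * (t + n) ^ 2) with hFdef
    have hFmono : ∀ n, F (n + 1) ≤ F n := by
      intro n
      have hn := hupos n
      show 1 / (2 * (t + ((n+1:ℕ):ℝ)) ^ 2) ≤ 1 / (2 * (t + n) ^ 2)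
      rw [hcast n]
      exact hstep _ 2 2 hn (by norm_num)
    have hHS := hasSum_telescope_of_nonneg F hFmono hinv2'
    have hsplit : S = 1 / (t + ((0:ℕ):ℝ)) ^ 3 + ∑' n : ℕ, 1 / (t + ((n + 1 : ℕ) : ℝ)) ^ 3 :=
      Summable.tsum_eq_zero_add hcube
    have hle : ∀ n : ℕ, 1 / (t + ((n + 1 : ℕ) : ℝ)) ^ 3 ≤ F n - F (n + 1) := by
      intro n
      have h := (hC (t + n) (hupos n)).le
      show 1 / (t + ((n + 1 : ℕ) : ℝ)) ^ 3
          ≤ 1 / (2 * (t + n) ^ 2) - 1 / (2 * (t + ((n+1:ℕ):ℝ)) ^ 2)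
      rw [hcast n]
      exact h
    have h0' : 1 / (t + ((0 + 1 : ℕ) : ℝ)) ^ 3 < F 0 - F (0 + 1) := by
      have h := hC (t + (0:ℕ)) (hupos 0)
      show 1 / (t + ((0 + 1 : ℕ) : ℝ)) ^ 3
          < 1 / (2 * (t + ((0:ℕ):ℝ)) ^ 2) - 1 / (2 * (t + ((0+1:ℕ):ℝ)) ^ 2)
      rw [hcast 0]
      exact h
    have htail : ∑' n : ℕ, 1 / (t + ((n + 1 : ℕ) : ℝ)) ^ 3 < 1 / (2 * t ^ 2) := by
      have hF0 : F 0 = 1 / (2 * t ^ 2) := by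
        show 1 / (2 * (t + ((0:ℕ):ℝ)) ^ 2) = 1 / (2 * t ^ 2)
        norm_num
      rw [← hF0, ← hHS.tsum_eq]
      exact Summable.tsum_lt_tsum_of_nonneg (fun n => by positivity) hle h0' hHS.summable
    have h0 : (1 : ℝ) / (t + ((0:ℕ):ℝ)) ^ 3 = 1 / t ^ 3 := by norm_num
    rw [hsplit, h0]
    linarith
  -- ============ assemble ============
  refine ⟨⟨hlow2, hup2⟩, ?_, ?_⟩
  · have hteq : tetragamma t = -2 * S := rfl
    have heq : -1 / t ^ 2 - 2 / t ^ 3 = -2 * (1 / t ^ 3 + 1 / (2 * t ^ 2)) := by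
      field_simp; ring
    rw [hteq, heq]
    linarith
  · have hteq : tetragamma t = -2 * S := rfl
    have heq : -1 / t ^ 2 - 1 / t ^ 3 = -2 * (1 / (2 * t ^ 2) + 1 / (2 * t ^ 3)) := by
      field_simp; ring
    rw [hteq, heq]
    linarith
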